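/- Let α ∈ ℂ with α ≠ 0. For every 0 < ε < 1 there exists δ > 0, depending only on ε and r, such that: if there exists an index 1 ≤ i ≤ r−1 with |e_{i+1}|_h / |e_i|_h ≤ ε|α| (equivalently h_{i+1}/hᵢ ≤ ε²|α|²), then |[f_α, (f_α)†_h]|_h ≥ δ·|f_α|_h². -/

import Mathlib

/-- The squared Hilbert–Schmidt norm, with respect to the Hermitian inner product
`⟨x,y⟩_h = Σᵢ hᵢ·xᵢ·conj(yᵢ)` on `V = ℂ^r` (for which `e₁,…,e_r` are orthogonal with
`|eᵢ|_h² = hᵢ`), of the endomorphism whose matrix in the standard basis is `M`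
(`M j i` is the coefficient of `e_j` in the image of `e_i`):
`|f|_h² = Σ_{i,j} (h_j/h_i)·|M_{j,i}|²`. -/
noncomputable def hsNormSq {r : ℕ} (h : Fin r → ℝ) (M : Matrix (Fin r) (Fin r) ℂ) : ℝ :=
  ∑ i, ∑ j, (h j / h i) * ‖M j i‖ ^ 2

/-- The matrix of the adjoint `f†_h`, with respect to `⟨·,·⟩_h`, of the endomorphism
with matrix `M`: `(f†_h)_{i,j} = (h_j/h_i)·conj(M_{j,i})`. -/
noncomputable def hAdjoint {r : ℕ} (h : Fin r → ℝ) (M : Matrix (Fin r) (Fin r) ℂ) :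
    Matrix (Fin r) (Fin r) ℂ :=
  fun i j => ((h j / h i : ℝ) : ℂ) * (starRingEnd ℂ) (M j i)

/-- The matrix of the endomorphism `f_α` with `f_α(eᵢ) = e_{i+1}` for `i` below the top
index and `f_α(e_top) = α^r·e_bot` (`0`-based indexing of the basis `e₀,…,e_{r−1}`). -/
def cyclicMat (r : ℕ) (α : ℂ) : Matrix (Fin r) (Fin r) ℂ :=
  fun i j =>
    if (i : ℕ) = (j : ℕ) + 1 then 1
    else if (i : ℕ) = 0 ∧ (j : ℕ) = r - 1 then α ^ r else 0

open Finset
open scoped Fin.CommRing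

def cyc (r : ℕ) (α : ℂ) (i : Fin r) : ℂ := if (i : ℕ) = r - 1 then α ^ r else 1

noncomputable def aseq {r : ℕ} [NeZero r] (h : Fin r → ℝ) (α : ℂ) (i : Fin r) : ℝ :=
  h (i + 1) / h i * ‖cyc r α i‖ ^ 2

lemma val_add_one' {r : ℕ} [NeZero r] (hr : 2 ≤ r) (i : Fin r) :
    ((i + 1 : Fin r) : ℕ) = ((i : ℕ) + 1) % r := by
  rw [Fin.val_add, Fin.val_one', Nat.mod_eq_of_lt (show 1 < r by omega)]

lemma cyclicMat_eq {r : ℕ} [NeZero r] (hr : 2 ≤ r) (α : ℂ) (j i : Fin r) :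
    cyclicMat r α j i = if j = i + 1 then cyc r α i else 0 := by
  have hj := j.isLt; have hi := i.isLt
  simp only [cyclicMat, cyc, Fin.ext_iff, val_add_one' hr]
  rcases Nat.lt_or_ge ((i : ℕ) + 1) r with hlt | hge
  · rw [Nat.mod_eq_of_lt hlt]
    split_ifs with h1 h2 h3 <;> first | rfl | omega
  · have hz : ((i : ℕ) + 1) % r = 0 := by
      have : (i : ℕ) + 1 = r := by omega
      simp [this]
    rw [hz]
    split_ifs with h1 h2 h3 <;> first | rfl | omega

lemma hAdjoint_eq {r : ℕ} [NeZero r] (hr : 2 ≤ r) (h : Fin r → ℝ) (α : ℂ) (i j : Fin r) :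
    hAdjoint h (cyclicMat r α) i j =
      if j = i + 1 then ((h (i + 1) / h i : ℝ) : ℂ) * (starRingEnd ℂ) (cyc r α i) else 0 := by
  rw [hAdjoint, cyclicMat_eq hr]
  split_ifs with hij
  · subst hij; rfl
  · simp

lemma hsNormSq_cyclic {r : ℕ} [NeZero r] (hr : 2 ≤ r) (h : Fin r → ℝ) (α : ℂ) :
    hsNormSq h (cyclicMat r α) = ∑ i, aseq h α i := by
  unfold hsNormSq
  refine Finset.sum_congr rfl fun i _ => ?_
  have : ∀ j : Fin r, (h j / h i) * ‖cyclicMat r α j i‖ ^ 2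
      = if j = i + 1 then aseq h α i else 0 := by
    intro j
    rw [cyclicMat_eq hr]
    split_ifs with hj
    · subst hj; simp [aseq]
    · simp
  rw [Finset.sum_congr rfl fun j _ => this j]
  simp

lemma conj_mul_self (z : ℂ) : (starRingEnd ℂ) z * z = ((‖z‖ ^ 2 : ℝ) : ℂ) := by
  rw [mul_comm, Complex.mul_conj, ← Complex.sq_norm]

lemma comm_eq {r : ℕ} [NeZero r] (hr : 2 ≤ r) (h : Fin r → ℝ) (α : ℂ) (i j : Fin r) :
    (cyclicMat r α * hAdjoint h (cyclicMat r α)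
      - hAdjoint h (cyclicMat r α) * cyclicMat r α) i j
    = if j = i then ((aseq h α (i - 1) - aseq h α i : ℝ) : ℂ) else 0 := by
  have hMA : (cyclicMat r α * hAdjoint h (cyclicMat r α)) i j
      = if j = i then ((aseq h α (i - 1) : ℝ) : ℂ) else 0 := by
    rw [Matrix.mul_apply]
    have step : ∀ k : Fin r, cyclicMat r α i k * hAdjoint h (cyclicMat r α) k j
        = if k = i - 1 then cyclicMat r α i k * hAdjoint h (cyclicMat r α) k j else 0 := by
      intro k
      split_ifs with hk
      · rfl
      · rw [cyclicMat_eq hr]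
        have : ¬ i = k + 1 := by
          intro hik; exact hk (by rw [hik]; ring)
        simp [this]
    rw [Finset.sum_congr rfl fun k _ => step k, Finset.sum_ite_eq' Finset.univ (i - 1)]
    simp only [Finset.mem_univ, if_true]
    rw [cyclicMat_eq hr, hAdjoint_eq hr]
    have h1 : (i - 1 : Fin r) + 1 = i := by ring
    rw [h1, if_pos rfl]
    by_cases hji : j = i
    · rw [if_pos hji, if_pos hji,
        show cyc r α (i - 1) * (((h i / h (i - 1) : ℝ) : ℂ) * (starRingEnd ℂ) (cyc r α (i - 1)))
          = ((h i / h (i - 1) : ℝ) : ℂ) * ((starRingEnd ℂ) (cyc r α (i - 1)) * cyc r α (i - 1))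
          from by ring, conj_mul_self, aseq, h1]
      push_cast; ring
    · rw [if_neg hji, if_neg hji, mul_zero]
  have hAM : (hAdjoint h (cyclicMat r α) * cyclicMat r α) i j
      = if j = i then ((aseq h α i : ℝ) : ℂ) else 0 := by
    rw [Matrix.mul_apply]
    have step : ∀ k : Fin r, hAdjoint h (cyclicMat r α) i k * cyclicMat r α k j
        = if k = i + 1 then hAdjoint h (cyclicMat r α) i k * cyclicMat r α k j else 0 := by
      intro k
      split_ifs with hk
      · rfl
      · rw [hAdjoint_eq hr]
        simp [hk]
    rw [Finset.sum_congr rfl fun k _ => step k, Finset.sum_ite_eq' Finset.univ (i + 1)]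
    simp only [Finset.mem_univ, if_true]
    rw [cyclicMat_eq hr, hAdjoint_eq hr, if_pos rfl]
    have h2 : (i + 1 = j + 1) ↔ (j = i) := by
      constructor
      · intro hh; exact (add_left_injective 1 hh).symm
      · intro hh; rw [hh]
    by_cases hji : j = i
    · rw [if_pos (h2.mpr hji), if_pos hji, mul_assoc]
      subst hji
      rw [conj_mul_self, aseq]
      push_cast; ring
    · rw [if_neg (fun hh => hji (h2.mp hh)), if_neg hji, mul_zero]
  rw [Matrix.sub_apply, hMA, hAM]
  split_ifs with hji
  · push_cast; ring
  · ring

lemma hsNormSq_comm {r : ℕ} [NeZero r] (hr : 2 ≤ r) (h : Fin r → ℝ) (hpos : ∀ i, 0 < h i)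
    (α : ℂ) :
    hsNormSq h (cyclicMat r α * hAdjoint h (cyclicMat r α)
      - hAdjoint h (cyclicMat r α) * cyclicMat r α)
    = ∑ i, (aseq h α (i + 1) - aseq h α i) ^ 2 := by
  have main : hsNormSq h (cyclicMat r α * hAdjoint h (cyclicMat r α)
      - hAdjoint h (cyclicMat r α) * cyclicMat r α)
      = ∑ i, (aseq h α (i - 1) - aseq h α i) ^ 2 := by
    unfold hsNormSq
    refine Finset.sum_congr rfl fun i _ => ?_
    have : ∀ j : Fin r, (h j / h i) * ‖
        ((cyclicMat r α * hAdjoint h (cyclicMat r α)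
          - hAdjoint h (cyclicMat r α) * cyclicMat r α) j i)‖ ^ 2
        = if i = j then (aseq h α (j - 1) - aseq h α j) ^ 2 else 0 := by
      intro j
      rw [comm_eq hr]
      split_ifs with hj
      · subst hj
        rw [div_self (ne_of_gt (hpos i)), Complex.norm_real, Real.norm_eq_abs, sq_abs, one_mul]
      · simp
    rw [Finset.sum_congr rfl fun j _ => this j, Finset.sum_ite_eq]
    simp
  rw [main]
  refine Fintype.sum_equiv (Equiv.subRight (1 : Fin r)) _ _ fun x => ?_
  simp only [Equiv.subRight_apply, sub_add_cancel]
  ring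

lemma telescope {r : ℕ} [NeZero r] (a : Fin r → ℝ) (i : Fin r) (t : ℕ) :
    a (i + (t : Fin r)) - a i = ∑ s ∈ Finset.range t, (a (i + (s : Fin r) + 1) - a (i + (s : Fin r))) := by
  induction t with
  | zero => simp
  | succ n ih =>
    rw [Finset.sum_range_succ, ← ih]
    push_cast
    ring_nf

lemma diff_bound {r : ℕ} [NeZero r] (a : Fin r → ℝ) (i k : Fin r) :
    |a k - a i| ≤ r * Real.sqrt (∑ j, (a (j + 1) - a j) ^ 2) := by
  set S := Real.sqrt (∑ j, (a (j + 1) - a j) ^ 2) with hS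
  have hS0 : 0 ≤ S := Real.sqrt_nonneg _
  have hone : ∀ j : Fin r, |a (j + 1) - a j| ≤ S := by
    intro j
    rw [hS, show |a (j + 1) - a j| = Real.sqrt ((a (j + 1) - a j) ^ 2) by
      rw [Real.sqrt_sq_eq_abs]]
    exact Real.sqrt_le_sqrt (Finset.single_le_sum
      (f := fun m => (a (m + 1) - a m) ^ 2) (fun m _ => sq_nonneg _) (Finset.mem_univ j))
  set t : ℕ := ((k - i : Fin r) : ℕ) with ht
  have hk : i + (t : Fin r) = k := by
    rw [ht, Fin.cast_val_eq_self (k - i)]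
    ring
  calc |a k - a i| = |∑ s ∈ Finset.range t, (a (i + (s : Fin r) + 1) - a (i + (s : Fin r)))| := by
        rw [← telescope a i t, hk]
    _ ≤ ∑ s ∈ Finset.range t, |a (i + (s : Fin r) + 1) - a (i + (s : Fin r))| :=
        Finset.abs_sum_le_sum_abs _ _
    _ ≤ ∑ _s ∈ Finset.range t, S := Finset.sum_le_sum fun s _ => hone _
    _ = t * S := by rw [Finset.sum_const, Finset.card_range, nsmul_eq_mul]
    _ ≤ r * S := by
        have : (t : ℝ) ≤ r := by
          have := (k - i).isLt
          exact_mod_cast le_of_lt this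
        exact mul_le_mul_of_nonneg_right this hS0

lemma prod_aseq {r : ℕ} [NeZero r] (hr : 2 ≤ r) (h : Fin r → ℝ) (hpos : ∀ i, 0 < h i)
    (α : ℂ) : ∏ i, aseq h α i = (‖α‖ ^ 2) ^ r := by
  unfold aseq
  rw [Finset.prod_mul_distrib]
  have h1 : ∏ i, h (i + 1) / h i = 1 := by
    rw [Finset.prod_div_distrib]
    rw [div_eq_one_iff_eq (Finset.prod_ne_zero_iff.mpr fun i _ => ne_of_gt (hpos i))]
    exact Fintype.prod_equiv (Equiv.addRight (1 : Fin r)) _ _ fun i => rfl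
  have h2 : ∏ i, ‖cyc r α i‖ ^ 2 = (‖α‖ ^ 2) ^ r := by
    have hc : ∀ i : Fin r, ‖cyc r α i‖ ^ 2
        = if i = (⟨r - 1, by omega⟩ : Fin r) then (‖α‖ ^ 2) ^ r else 1 := by
      intro i
      rcases eq_or_ne (i : ℕ) (r - 1) with hi | hi
      · rw [cyc, if_pos hi, if_pos (Fin.ext hi), norm_pow]; ring
      · rw [cyc, if_neg hi, if_neg (fun hh => hi (by rw [hh]))]; simp
    rw [Finset.prod_congr rfl fun i _ => hc i, Finset.prod_ite_eq' Finset.univ]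
    simp
  rw [h1, h2, one_mul]

/-- for `α ≠ 0` and `0 < ε < 1` there is `δ > 0`, depending only on `ε`
and `r`, such that if `h_{i+1} ≤ ε²|α|²·hᵢ` for some consecutive pair of indices
(equivalently `|e_{i+1}|_h/|eᵢ|_h ≤ ε|α|`), then `|[f_α,(f_α)†_h]|_h ≥ δ·|f_α|_h²`. -/
theorem cyclic_commutator_lower_bound
    (r : ℕ) (hr : 2 ≤ r) (ε : ℝ) (hε0 : 0 < ε) (hε1 : ε < 1) :
    ∃ δ : ℝ, 0 < δ ∧
      ∀ h : Fin r → ℝ, (∀ i, 0 < h i) →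
      ∀ α : ℂ, α ≠ 0 →
        (∃ i j : Fin r, (j : ℕ) = (i : ℕ) + 1 ∧
            h j ≤ ε ^ 2 * ‖α‖ ^ 2 * h i) →
        δ * hsNormSq h (cyclicMat r α)
          ≤ Real.sqrt (hsNormSq h
              (cyclicMat r α * hAdjoint h (cyclicMat r α)
                - hAdjoint h (cyclicMat r α) * cyclicMat r α)) := by
  haveI : NeZero r := ⟨by omega⟩
  haveI : Nonempty (Fin r) := ⟨⟨0, by omega⟩⟩
  have hr0 : (0:ℝ) < r := by exact_mod_cast (by omega : 0 < r)
  have hε2 : ε ^ 2 < 1 := by nlinarith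
  refine ⟨(1 - ε ^ 2) / (r : ℝ) ^ 2, div_pos (by linarith) (by positivity), ?_⟩
  rintro h hpos α hα ⟨i₀, j₀, hij, hle⟩
  have hα2 : 0 < ‖α‖ ^ 2 := by
    have := norm_pos_iff.mpr hα
    positivity
  have hcyc : ∀ i : Fin r, cyc r α i ≠ 0 := by
    intro i
    rw [cyc]
    split_ifs
    · exact pow_ne_zero _ hα
    · exact one_ne_zero
  have hapos : ∀ i, 0 < aseq h α i := fun i =>
    mul_pos (div_pos (hpos _) (hpos _)) (pow_pos (norm_pos_iff.mpr (hcyc i)) 2)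
  -- the small element
  have hj₀lt := j₀.isLt
  have hj₀ : j₀ = i₀ + 1 := by
    apply Fin.ext
    rw [val_add_one' hr, Nat.mod_eq_of_lt (by omega)]
    omega
  have hci₀ : cyc r α i₀ = 1 := if_neg (by omega)
  have hai₀ : aseq h α i₀ ≤ ε ^ 2 * ‖α‖ ^ 2 := by
    rw [aseq, hci₀, ← hj₀]
    simp only [map_one, norm_one, one_pow, mul_one]
    exact (div_le_iff₀ (hpos i₀)).mpr hle
  -- the big element
  have hbig : ∃ k, ‖α‖ ^ 2 ≤ aseq h α k := by
    by_contra hc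
    push_neg at hc
    have hlt : ∏ i, aseq h α i < ∏ _i : Fin r, ‖α‖ ^ 2 :=
      Finset.prod_lt_prod_of_nonempty (fun i _ => hapos i) (fun i _ => hc i)
        Finset.univ_nonempty
    rw [prod_aseq hr h hpos α, Finset.prod_const, Finset.card_univ, Fintype.card_fin] at hlt
    exact lt_irrefl _ hlt
  obtain ⟨kb, hkb⟩ := hbig
  -- the maximum
  obtain ⟨k₀, -, hk₀⟩ := Finset.exists_max_image Finset.univ (aseq h α)
    ⟨⟨0, by omega⟩, Finset.mem_univ _⟩
  have hk : ∀ j, aseq h α j ≤ aseq h α k₀ := fun j => hk₀ j (Finset.mem_univ j)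
  have hk₀big : ‖α‖ ^ 2 ≤ aseq h α k₀ := le_trans hkb (hk kb)
  -- sum bound
  have hsum : (∑ j, aseq h α j) ≤ (r : ℝ) * aseq h α k₀ := by
    calc (∑ j, aseq h α j) ≤ ∑ _j : Fin r, aseq h α k₀ :=
          Finset.sum_le_sum fun j _ => hk j
      _ = (r : ℝ) * aseq h α k₀ := by
          rw [Finset.sum_const, Finset.card_univ, Fintype.card_fin, nsmul_eq_mul]
  -- gap bound
  set S := Real.sqrt (∑ j, (aseq h α (j + 1) - aseq h α j) ^ 2) with hS
  have hS0 : 0 ≤ S := Real.sqrt_nonneg _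
  have hgap : (1 - ε ^ 2) * aseq h α k₀ ≤ aseq h α k₀ - aseq h α i₀ := by
    have h1 : ε ^ 2 * ‖α‖ ^ 2 ≤ ε ^ 2 * aseq h α k₀ :=
      mul_le_mul_of_nonneg_left hk₀big (sq_nonneg ε)
    nlinarith
  have hgapS : (1 - ε ^ 2) * aseq h α k₀ ≤ (r : ℝ) * S := by
    have hd := diff_bound (aseq h α) i₀ k₀
    calc (1 - ε ^ 2) * aseq h α k₀ ≤ aseq h α k₀ - aseq h α i₀ := hgap
      _ ≤ |aseq h α k₀ - aseq h α i₀| := le_abs_self _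
      _ ≤ (r : ℝ) * S := hd
  rw [hsNormSq_cyclic hr, hsNormSq_comm hr h hpos α, ← hS]
  rw [div_mul_eq_mul_div, div_le_iff₀ (by positivity)]
  have e1 : (1 - ε ^ 2) * (∑ j, aseq h α j) ≤ (1 - ε ^ 2) * ((r : ℝ) * aseq h α k₀) :=
    mul_le_mul_of_nonneg_left hsum (by linarith)
  have e3 : (r : ℝ) * ((1 - ε ^ 2) * aseq h α k₀) ≤ (r : ℝ) * ((r : ℝ) * S) :=
    mul_le_mul_of_nonneg_left hgapS (le_of_lt hr0)
  nlinarith
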